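/- For every (R,ψ) ∈ ℝ², the Euclidean norm of ∂F/∂R(R,ψ) equals 1, the Euclidean inner product of ∂F/∂R(R,ψ) and ∂F/∂ψ(R,ψ) equals 0, and the Euclidean norm of ∂F/∂ψ(R,ψ) equals |R − l(ψ)|; that is, the pullback of the Euclidean metric under F is dR² + (R − l(ψ))² dψ², which is the metric (3) of the paper. -/

import Mathlib

open Real

/-- Equation (9) of the paper: Cartesian coordinates as functions of the
coordinates `(R, ψ)` built from the tangent rays of a basic curve. -/
noncomputable def F (l : ℝ → ℝ) (p : ℝ × ℝ) : ℝ × ℝ :=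
  (p.1 * Real.sin p.2 - ∫ t in (0:ℝ)..p.2, l t * Real.cos t,
   p.1 * Real.cos p.2 + ∫ t in (0:ℝ)..p.2, l t * Real.sin t)

/-- The pullback of the Euclidean metric under `F` is
`dR² + (R − l(ψ))² dψ²`: the metric (3) of the paper. -/
theorem stmt_1 (l : ℝ → ℝ) (hl : Continuous l) (R ψ : ℝ) :
    Real.sqrt ((deriv (fun r => F l (r, ψ)) R).1 ^ 2 +
        (deriv (fun r => F l (r, ψ)) R).2 ^ 2) = 1 ∧
    (deriv (fun r => F l (r, ψ)) R).1 * (deriv (fun p => F l (R, p)) ψ).1 +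
        (deriv (fun r => F l (r, ψ)) R).2 * (deriv (fun p => F l (R, p)) ψ).2 = 0 ∧
    Real.sqrt ((deriv (fun p => F l (R, p)) ψ).1 ^ 2 +
        (deriv (fun p => F l (R, p)) ψ).2 ^ 2) = |R - l ψ| := by
  have h1 : HasDerivAt (fun r => F l (r, ψ)) (Real.sin ψ, Real.cos ψ) R := by
    apply HasDerivAt.prodMk
    · simpa using ((hasDerivAt_id R).mul_const (Real.sin ψ)).sub_const (∫ t in (0:ℝ)..ψ, l t * Real.cos t)
    · simpa using ((hasDerivAt_id R).mul_const (Real.cos ψ)).add_const (∫ t in (0:ℝ)..ψ, l t * Real.sin t)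
  have hc : IntervalIntegrable (fun t => l t * Real.cos t) MeasureTheory.volume 0 ψ :=
    (hl.mul Real.continuous_cos).intervalIntegrable 0 ψ
  have hs : IntervalIntegrable (fun t => l t * Real.sin t) MeasureTheory.volume 0 ψ :=
    (hl.mul Real.continuous_sin).intervalIntegrable 0 ψ
  have hC : HasDerivAt (fun p => ∫ t in (0:ℝ)..p, l t * Real.cos t) (l ψ * Real.cos ψ) ψ :=
    intervalIntegral.integral_hasDerivAt_right hc
      ((hl.mul Real.continuous_cos).stronglyMeasurableAtFilter _ _)
      (hl.mul Real.continuous_cos).continuousAt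
  have hS : HasDerivAt (fun p => ∫ t in (0:ℝ)..p, l t * Real.sin t) (l ψ * Real.sin ψ) ψ :=
    intervalIntegral.integral_hasDerivAt_right hs
      ((hl.mul Real.continuous_sin).stronglyMeasurableAtFilter _ _)
      (hl.mul Real.continuous_sin).continuousAt
  have h2 : HasDerivAt (fun p => F l (R, p))
      ((R - l ψ) * Real.cos ψ, -((R - l ψ) * Real.sin ψ)) ψ := by
    apply HasDerivAt.prodMk
    · have := (((Real.hasDerivAt_sin ψ).const_mul R).sub hC)
      convert this using 1
      exacts [rfl, by ring]
    · have := (((Real.hasDerivAt_cos ψ).const_mul R).add hS)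
      convert this using 1
      exacts [rfl, by ring]
  rw [h1.deriv, h2.deriv]
  refine ⟨?_, by ring, ?_⟩
  · simp [Real.sin_sq_add_cos_sq]
  · have : ((R - l ψ) * Real.cos ψ) ^ 2 + (-((R - l ψ) * Real.sin ψ)) ^ 2 = (R - l ψ) ^ 2 := by
      have := Real.sin_sq_add_cos_sq ψ
      nlinarith
    rw [this, Real.sqrt_sq_eq_abs]
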